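/- With the setup of the previous statement, let $L, R, N$ be lagrangian subspaces of $M$ with $N \cap L = N \cap R = 0$, and let $b: L \to N$ be the unique map with $R = \{l + b(l) : l \in L\}$. Define $\theta(R, N, L) = \sum_{l \in L} \psi(\tfrac12 \omega\langle l, b(l)\rangle)$. Then $\tilde F_{R,N} * \tilde F_{N,L} = q^{d+1}\, \theta(R,N,L)\, \tilde F_{R,L}$. -/

import Mathlib

/-!
STATEMENT 5.  With the Heisenberg setup, for lagrangians `L, R, N` with
`N ∩ L = N ∩ R = 0` and `b : L → N` the unique map with `R = {l + b l}`, set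
`θ(R,N,L) = ∑_{l∈L} ψ(½ω⟨l, b l⟩)`.  Then
`F̃_{R,N} * F̃_{N,L} = q^{d+1} θ(R,N,L) F̃_{R,L}`.
-/

/-- Heisenberg group multiplication on `M × k`. -/
def Hmul {k M : Type*} [Field k] [AddCommGroup M] [Module k M]
    (ω : M →ₗ[k] M →ₗ[k] k) (h₁ h₂ : M × k) : M × k :=
  (h₁.1 + h₂.1, h₁.2 + h₂.2 + 2⁻¹ * ω h₁.1 h₂.1)

/-- Heisenberg group inversion on `M × k`. -/
def Hinv {k M : Type*} [Field k] [AddCommGroup M] [Module k M]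
    (h : M × k) : M × k :=
  (-h.1, -h.2)

private lemma key_lemma {k M : Type*} [Field k] [Fintype k]
    [AddCommGroup M] [Module k M] [Fintype M]
    (ω : M →ₗ[k] M →ₗ[k] k)
    (hnd : ∀ m : M, (∀ m' : M, ω m m' = 0) → m = 0) (d : ℕ)
    (N L : Submodule k M)
    (hdN : Module.finrank k N = d) (hdL : Module.finrank k L = d)
    (hNN : ∀ x ∈ N, ∀ y ∈ N, ω x y = 0)
    (hspan : ∀ m' : M, ∃ n ∈ N, ∃ l ∈ L, (n : M) + l = m')
    (hskew : ∀ x y : M, ω x y = -ω y x)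
    (b : ↥L →ₗ[k] M) (hbN : ∀ l : ↥L, b l ∈ N)
    (hsym : ∀ l₁ l₂ : ↥L, ω ↑l₁ (b l₂) = ω ↑l₂ (b l₁))
    (n : ↥N) (hn : ∀ t : ↥L, b t = 0 → ω ↑n ↑t = 0) : ∃ l : ↥L, b l = ↑n := by
  have hFD : FiniteDimensional k M := Module.Finite.of_finite
  set b' : ↥L →ₗ[k] ↥N := b.codRestrict N hbN with hb'
  have hb'coe : ∀ l : ↥L, (↑(b' l) : M) = b l := fun l => rfl
  set J : ↥N →ₗ[k] Module.Dual k ↥L :=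
    { toFun := fun n => (ω ↑n).comp L.subtype
      map_add' := by intro n₁ n₂; ext l; simp
      map_smul' := by intro s n₁; ext l; simp } with hJ
  have hJapp : ∀ (n : ↥N) (l : ↥L), J n l = ω ↑n ↑l := fun n l => rfl
  have hJinj : Function.Injective J := by
    rw [← LinearMap.ker_eq_bot]
    apply (Submodule.eq_bot_iff _).2
    intro n hn
    rw [LinearMap.mem_ker] at hn
    have hn' : ∀ l : ↥L, ω ↑n ↑l = 0 := fun l => by
      rw [← hJapp n l, hn]; rfl
    have hz : ∀ m' : M, ω ↑n m' = 0 := by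
      intro m'
      obtain ⟨x, hx, y, hy, hxy⟩ := hspan m'
      calc ω ↑n m' = ω ↑n (x + y) := by rw [hxy]
      _ = 0 := by rw [map_add, hNN _ n.2 _ hx, hn' ⟨y, hy⟩, add_zero]
    exact Subtype.ext (hnd _ hz)
  have hJsurj : Function.Surjective J := by
    have hdual : Module.finrank k ↥N = Module.finrank k (Module.Dual k ↥L) := by
      rw [Subspace.dual_finrank_eq, hdL, hdN]
    exact (LinearMap.injective_iff_surjective_of_finrank_eq_finrank hdual).1 hJinj
  set Φ : ↥N →ₗ[k] Module.Dual k ↥(LinearMap.ker b') :=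
    ((LinearMap.ker b').subtype.dualMap).comp J with hΦ
  have hΦapp : ∀ (n : ↥N) (t : ↥(LinearMap.ker b')), Φ n t = ω ↑n ↑(↑t : ↥L) := by
    intro n t; rfl
  have hbker : ∀ t : ↥(LinearMap.ker b'), b ↑t = 0 := by
    intro t
    have ht := t.2
    rw [LinearMap.mem_ker] at ht
    rw [← hb'coe, ht, Submodule.coe_zero]
  have hΦsurj : Function.Surjective Φ := by
    rw [hΦ, LinearMap.coe_comp]
    exact Function.Surjective.comp
      (LinearMap.dualMap_surjective_of_injective (Submodule.injective_subtype _)) hJsurj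
  have hrange_le : LinearMap.range b' ≤ LinearMap.ker Φ := by
    rintro _ ⟨l, rfl⟩
    rw [LinearMap.mem_ker]
    ext t
    rw [hΦapp]
    have h1 : ω (↑(↑t : ↥L)) (b l) = 0 := by
      rw [hsym (↑t) l, hbker t]
      simp
    rw [hb'coe, hskew, h1, neg_zero]
    rfl
  have hfr1 : Module.finrank k ↥(LinearMap.ker Φ)
      = d - Module.finrank k ↥(LinearMap.ker b') := by
    have h1 := LinearMap.finrank_range_add_finrank_ker Φ
    rw [LinearMap.range_eq_top.2 hΦsurj, finrank_top, Subspace.dual_finrank_eq, hdN] at h1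
    omega
  have hfr2 : Module.finrank k ↥(LinearMap.range b')
      = d - Module.finrank k ↥(LinearMap.ker b') := by
    have h1 := LinearMap.finrank_range_add_finrank_ker b'
    rw [hdL] at h1
    omega
  have heq : LinearMap.range b' = LinearMap.ker Φ :=
    Submodule.eq_of_le_of_finrank_le hrange_le (by rw [hfr1, hfr2])
  have hnker : n ∈ LinearMap.ker Φ := by
    rw [LinearMap.mem_ker]
    ext t
    rw [hΦapp]
    exact (by exact hn ↑t (hbker t) : _)
  rw [← heq] at hnker
  obtain ⟨l, hl⟩ := hnker
  exact ⟨l, by rw [← hb'coe, hl]⟩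

theorem statement5 {k M : Type*} [Field k] [Fintype k]
    [AddCommGroup M] [Module k M] [Fintype M]
    (hchar : ringChar k ≠ 2) (d : ℕ)
    (hdim : Module.finrank k M = 2 * d)
    (ω : M →ₗ[k] M →ₗ[k] k)
    (halt : ∀ m : M, ω m m = 0)
    (hnd : ∀ m : M, (∀ m' : M, ω m m' = 0) → m = 0)
    (ψ : AddChar k ℂ) (hψ : ∃ a : k, ψ a ≠ 1)
    (L R N : Submodule k M) [Fintype L]
    (hL : LinearMap.BilinForm.orthogonal ω L = L)
    (hR : LinearMap.BilinForm.orthogonal ω R = R)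
    (hN : LinearMap.BilinForm.orthogonal ω N = N)
    (hNL : N ⊓ L = ⊥) (hNR : N ⊓ R = ⊥)
    (b : ↥L →ₗ[k] M) (hbN : ∀ l : ↥L, b l ∈ N)
    (hgraph : ∀ x : M, x ∈ R ↔ ∃ l : ↥L, x = ↑l + b l)
    (FRN FNL FRL : M × k → ℂ)
    (hFRN : ∀ r ∈ R, ∀ n ∈ N, ∀ a₁ a₂ : k,
      FRN (Hmul ω (r, a₁) (n, a₂)) = ψ a₁ * ψ a₂)
    (hFRN0 : ∀ h : M × k,
      (¬ ∃ r ∈ R, ∃ n ∈ N, ∃ a₁ a₂ : k, h = Hmul ω (r, a₁) (n, a₂)) → FRN h = 0)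
    (hFNL : ∀ n ∈ N, ∀ l ∈ L, ∀ a₁ a₂ : k,
      FNL (Hmul ω (n, a₁) (l, a₂)) = ψ a₁ * ψ a₂)
    (hFNL0 : ∀ h : M × k,
      (¬ ∃ n ∈ N, ∃ l ∈ L, ∃ a₁ a₂ : k, h = Hmul ω (n, a₁) (l, a₂)) → FNL h = 0)
    (hFRL : ∀ r ∈ R, ∀ l ∈ L, ∀ a₁ a₂ : k,
      FRL (Hmul ω (r, a₁) (l, a₂)) = ψ a₁ * ψ a₂)
    (hFRL0 : ∀ h : M × k,
      (¬ ∃ r ∈ R, ∃ l ∈ L, ∃ a₁ a₂ : k, h = Hmul ω (r, a₁) (l, a₂)) → FRL h = 0) :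
    ∀ h : M × k,
      (∑ v : M × k, FRN (Hmul ω h (Hinv v)) * FNL v)
        = (Fintype.card k : ℂ) ^ (d + 1) *
            (∑ l : ↥L, ψ (2⁻¹ * ω ↑l (b l))) * FRL h := by
  classical
  have hFD : FiniteDimensional k M := Module.Finite.of_finite
  have hNfin : Fintype ↥N := Fintype.ofFinite _
  have h2 : (2 : k) ≠ 0 := Ring.two_ne_zero hchar
  -- basic facts about ω
  have hskew : ∀ x y : M, ω x y = -ω y x := by
    intro x y
    have h := halt (x + y)
    simp only [map_add, LinearMap.add_apply, halt x, halt y] at h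
    linear_combination h
  have hrefl : LinearMap.BilinForm.IsRefl ω := (show LinearMap.IsAlt ω from halt).isRefl
  have hndg : LinearMap.BilinForm.Nondegenerate ω :=
    (LinearMap.IsRefl.nondegenerate_iff_separatingLeft hrefl).2 hnd
  -- lagrangian vanishing
  have hvan : ∀ W : Submodule k M, LinearMap.BilinForm.orthogonal ω W = W →
      ∀ x ∈ W, ∀ y ∈ W, ω x y = 0 := by
    intro W hW x hx y hy
    have hy' : y ∈ LinearMap.BilinForm.orthogonal ω W := by rw [hW]; exact hy
    exact hy' x hx
  have hLL := hvan L hL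
  have hNN := hvan N hN
  have hRR := hvan R hR
  -- dimensions
  have hrank : ∀ W : Submodule k M, LinearMap.BilinForm.orthogonal ω W = W →
      Module.finrank k W = d := by
    intro W hW
    have h1 := LinearMap.BilinForm.finrank_orthogonal hndg W
    rw [hW, hdim] at h1
    have h2 : Module.finrank k W ≤ 2 * d := hdim ▸ Submodule.finrank_le W
    omega
  have hdL := hrank L hL
  have hdN := hrank N hN
  -- complementarity
  have hcompl : IsCompl N L := by
    constructor
    · rw [disjoint_iff]; exact hNL
    · rw [codisjoint_iff]
      have hsup := Submodule.finrank_sup_add_finrank_inf_eq N L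
      rw [hNL, finrank_bot] at hsup
      apply Submodule.eq_top_of_finrank_eq
      rw [hdim]
      omega
  set p1 : M →ₗ[k] ↥N := N.projectionOnto L hcompl with hp1def
  set p2 : M →ₗ[k] ↥L := L.projectionOnto N hcompl.symm with hp2def
  have hproj : ∀ x : M, (↑(p1 x) : M) + ↑(p2 x) = x := fun x =>
    Submodule.projection_add_projection_eq_self hcompl x
  have hp1N : ∀ (y : M) (hy : y ∈ N), p1 y = ⟨y, hy⟩ := by
    intro y hy
    exact Submodule.linearProjOfIsCompl_apply_left hcompl ⟨y, hy⟩
  have hp1L : ∀ y ∈ L, p1 y = 0 := fun y hy =>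
    Submodule.projectionOnto_apply_of_mem_right hcompl hy
  have hp2L : ∀ (y : M) (hy : y ∈ L), p2 y = ⟨y, hy⟩ := by
    intro y hy
    exact Submodule.linearProjOfIsCompl_apply_left hcompl.symm ⟨y, hy⟩
  have hp2N : ∀ y ∈ N, p2 y = 0 := fun y hy =>
    Submodule.projectionOnto_apply_of_mem_right hcompl.symm hy
  -- symmetry of b-pairing
  have hsym : ∀ l₁ l₂ : ↥L, ω ↑l₁ (b l₂) = ω ↑l₂ (b l₁) := by
    intro l₁ l₂
    have h0 : ω (↑l₁ + b l₁) (↑l₂ + b l₂) = 0 :=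
      hRR _ ((hgraph _).2 ⟨l₁, rfl⟩) _ ((hgraph _).2 ⟨l₂, rfl⟩)
    have e1 : ω ↑l₁ ↑l₂ = 0 := hLL _ l₁.2 _ l₂.2
    have e2 : ω (b l₁) (b l₂) = 0 := hNN _ (hbN l₁) _ (hbN l₂)
    have e3 : ω (b l₁) ↑l₂ = -ω ↑l₂ (b l₁) := hskew _ _
    simp only [map_add, LinearMap.add_apply] at h0
    rw [e1, e2, e3] at h0
    linear_combination h0
  -- the key surjectivity lemma
  have key : ∀ n : ↥N, (∀ t : ↥L, b t = 0 → ω ↑n ↑t = 0) → ∃ l : ↥L, b l = ↑n := by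
    intro n hn
    refine key_lemma ω hnd d N L hdN hdL hNN
      (fun m' => ⟨↑(p1 m'), (p1 m').2, ↑(p2 m'), (p2 m').2, hproj m'⟩)
      hskew b hbN hsym n hn
  -- evaluation of FNL
  have hFNLe : ∀ (x : M) (a : k), FNL (x, a) = ψ (a - 2⁻¹ * ω ↑(p1 x) ↑(p2 x)) := by
    intro x a
    have h1 : ((x, a) : M × k) =
        Hmul ω (↑(p1 x), a - 2⁻¹ * ω ↑(p1 x) ↑(p2 x)) (↑(p2 x), (0 : k)) := by
      rw [Hmul, Prod.mk.injEq]
      exact ⟨(hproj x).symm, by ring⟩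
    rw [h1, hFNL _ (p1 x).2 _ (p2 x).2]
    simp
  -- evaluation of FRN
  have hFRNe : ∀ (y : M) (c' : k), FRN (y, c') =
      ψ (c' - 2⁻¹ * ω (↑(p2 y) + b (p2 y)) (↑(p1 y) - b (p2 y))) := by
    intro y c'
    have hrR : (↑(p2 y) : M) + b (p2 y) ∈ R := (hgraph _).2 ⟨p2 y, rfl⟩
    have hnN : (↑(p1 y) : M) - b (p2 y) ∈ N := sub_mem (p1 y).2 (hbN _)
    have h1 : ((y, c') : M × k) =
        Hmul ω (↑(p2 y) + b (p2 y),
          c' - 2⁻¹ * ω (↑(p2 y) + b (p2 y)) (↑(p1 y) - b (p2 y)))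
          (↑(p1 y) - b (p2 y), (0 : k)) := by
      rw [Hmul, Prod.mk.injEq]
      constructor
      · conv_lhs => rw [← hproj y]
        rw [add_comm, add_add_sub_cancel]
      · ring
    rw [h1, hFRN _ hrR _ hnN]
    simp
  intro hpair
  obtain ⟨m, c⟩ := hpair
  set nm : ↥N := p1 m with hnm
  set lm : ↥L := p2 m with hlm
  have hm : (↑nm : M) + ↑lm = m := hproj m
  set θ : ℂ := ∑ l : ↥L, ψ (2⁻¹ * ω ↑l (b l)) with hθ
  set f : ↥L → ℂ := fun u =>
    ψ (c - 2⁻¹ * ω ↑nm ↑lm + ω ↑nm ↑u + 2⁻¹ * ω ↑u (b u)) with hf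
  -- pointwise evaluation of the integrand
  have hpt : ∀ (x : M) (a : k),
      FRN (Hmul ω (m, c) (Hinv (x, a))) * FNL (x, a) = f (lm - p2 x) := by
    intro x a
    have h1 : Hmul ω (m, c) (Hinv (x, a)) = (m + -x, c + -a + 2⁻¹ * ω m (-x)) := rfl
    rw [h1, hFRNe, hFNLe, hf]
    rw [← AddChar.map_add_eq_mul]
    congr 1
    have hy1 : p1 (m + -x) = nm - p1 x := by
      rw [map_add, map_neg, ← sub_eq_add_neg]
    have hy2 : p2 (m + -x) = lm - p2 x := by
      rw [map_add, map_neg, ← sub_eq_add_neg]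
    rw [hy1, hy2]
    have hx : (↑(p1 x) : M) + ↑(p2 x) = x := hproj x
    generalize hgn : p1 x = n at *
    generalize hgl : p2 x = l at *
    rw [← hx, ← hm]
    have mNm : (↑nm : M) ∈ N := nm.2
    have mNx : (↑n : M) ∈ N := n.2
    have mB1 : b lm ∈ N := hbN lm
    have mB2 : b l ∈ N := hbN l
    have mLm : (↑lm : M) ∈ L := lm.2
    have mLx : (↑l : M) ∈ L := l.2
    simp only [Submodule.coe_sub, map_add, map_sub, map_neg, LinearMap.add_apply,
      LinearMap.sub_apply, LinearMap.neg_apply]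
    simp only [hNN _ mNm _ mNm, hNN _ mNm _ mNx, hNN _ mNm _ mB1, hNN _ mNm _ mB2,
      hNN _ mNx _ mNm, hNN _ mNx _ mNx, hNN _ mNx _ mB1, hNN _ mNx _ mB2,
      hNN _ mB1 _ mNm, hNN _ mB1 _ mNx, hNN _ mB1 _ mB1, hNN _ mB1 _ mB2,
      hNN _ mB2 _ mNm, hNN _ mB2 _ mNx, hNN _ mB2 _ mB1, hNN _ mB2 _ mB2,
      hLL _ mLm _ mLm, hLL _ mLm _ mLx, hLL _ mLx _ mLm, hLL _ mLx _ mLx,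
      hskew ↑lm ↑nm, hskew ↑lm ↑n, hskew (b lm) ↑lm, hskew (b lm) ↑l,
      hskew ↑l ↑nm, hskew ↑l ↑n, hskew (b l) ↑lm, hskew (b l) ↑l]
    field_simp
    ring
  -- sum over the central variable
  have hsplit : (∑ v : M × k, FRN (Hmul ω (m, c) (Hinv v)) * FNL v)
      = (Fintype.card k : ℂ) * ∑ x : M, f (lm - p2 x) := by
    rw [Fintype.sum_prod_type, Finset.mul_sum]
    refine Finset.sum_congr rfl fun x _ => ?_
    rw [Finset.sum_congr rfl fun a _ => hpt x a]
    rw [Finset.sum_const, Finset.card_univ, nsmul_eq_mul]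
  -- sum over M splits through p2
  have hsum1 : (∑ x : M, f (lm - p2 x))
      = (Fintype.card ↥N : ℂ) * ∑ l : ↥L, f (lm - l) := by
    rw [← (Submodule.prodEquivOfIsCompl N L hcompl).toEquiv.sum_comp
      (fun x => f (lm - p2 x)), Fintype.sum_prod_type, Finset.sum_comm, Finset.mul_sum]
    refine Finset.sum_congr rfl fun l _ => ?_
    have : ∀ n : ↥N, p2 ((Submodule.prodEquivOfIsCompl N L hcompl).toEquiv (n, l)) = l := by
      intro n
      have : ((Submodule.prodEquivOfIsCompl N L hcompl).toEquiv (n, l) : M) = ↑n + ↑l := rfl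
      rw [this, map_add, hp2N _ n.2, hp2L _ l.2]
      simp
    rw [Finset.sum_congr rfl fun n _ => by rw [this n]]
    rw [Finset.sum_const, Finset.card_univ, nsmul_eq_mul]
  have hsum2 : (∑ l : ↥L, f (lm - l)) = ∑ u : ↥L, f u :=
    Fintype.sum_equiv (Equiv.subLeft lm) (fun l => f (lm - l)) f (fun l => rfl)
  -- cardinality
  have hcardN : (Fintype.card ↥N : ℂ) = (Fintype.card k : ℂ) ^ d := by
    rw [Module.card_eq_pow_finrank (K := k) (V := ↥N), hdN]
    push_cast
    ring
  set T : ℂ := ∑ u : ↥L, f u with hT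
  have hLHS : (∑ v : M × k, FRN (Hmul ω (m, c) (Hinv v)) * FNL v)
      = (Fintype.card k : ℂ) ^ (d + 1) * T := by
    rw [hsplit, hsum1, hsum2, hcardN]
    ring
  by_cases hcase : ∃ l₀ : ↥L, b l₀ = ↑nm
  · obtain ⟨l₀, hl₀⟩ := hcase
    have hTval : T = ψ (c - 2⁻¹ * ω ↑nm ↑lm - 2⁻¹ * ω ↑l₀ (b l₀)) * θ := by
      rw [hT, ← Fintype.sum_equiv (Equiv.addRight l₀) (fun u => f (u + l₀)) f (fun u => rfl), hθ, Finset.mul_sum]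
      refine Finset.sum_congr rfl fun u _ => ?_
      show f (u + l₀) = _
      rw [hf]
      rw [← AddChar.map_add_eq_mul]
      refine congrArg ψ ?_
      rw [← hl₀]
      simp only [Submodule.coe_add, map_add, LinearMap.add_apply]
      simp only [hskew (b l₀) ↑u, hskew (b l₀) ↑l₀]
      rw [hsym l₀ u]
      field_simp
      ring
    have hFRLval : FRL (m, c) = ψ (c - 2⁻¹ * ω ↑nm ↑lm - 2⁻¹ * ω ↑l₀ (b l₀)) := by
      have h1 : ((m, c) : M × k) =
          Hmul ω (↑l₀ + b l₀, c - 2⁻¹ * ω (↑l₀ + b l₀) ↑(lm - l₀)) (↑(lm - l₀), (0 : k)) := by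
        rw [Hmul, Prod.mk.injEq]
        constructor
        · rw [hl₀, ← hm, Submodule.coe_sub]
          dsimp only
          abel
        · ring
      rw [h1, hFRL _ ((hgraph _).2 ⟨l₀, rfl⟩) _ (lm - l₀).2]
      rw [AddChar.map_zero_eq_one, mul_one]
      refine congrArg ψ ?_
      rw [← hl₀]
      simp only [Submodule.coe_sub, map_add, map_sub, LinearMap.add_apply,
        LinearMap.sub_apply]
      simp only [hLL _ l₀.2 _ lm.2, hLL _ l₀.2 _ l₀.2, hskew (b l₀) ↑l₀]
      field_simp
      ring
    rw [hLHS, hTval, hFRLval]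
    ring
  · -- degenerate case : both sides vanish
    have hFRL0' : FRL (m, c) = 0 := by
      apply hFRL0
      rintro ⟨r, hr, l, hl, a₁, a₂, heq⟩
      obtain ⟨l₁, rfl⟩ := (hgraph r).1 hr
      apply hcase
      refine ⟨l₁, ?_⟩
      have h1 : m = ↑l₁ + b l₁ + l := congrArg Prod.fst heq
      have h2 : p1 m = ⟨b l₁, hbN l₁⟩ := by
        rw [h1, map_add, map_add, hp1L _ l₁.2, hp1L _ hl, hp1N (b l₁) (hbN l₁)]
        simp
      rw [hnm, h2]
    have hTzero : T = 0 := by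
      have hker : ¬ ∀ t : ↥L, b t = 0 → ω ↑nm ↑t = 0 := fun hall => hcase (key nm hall)
      push_neg at hker
      obtain ⟨t, hbt, hωt⟩ := hker
      obtain ⟨a, hψa⟩ := hψ
      set t' : ↥L := (a / ω ↑nm ↑t) • t with ht'
      have hbt' : b t' = 0 := by rw [ht', map_smul, hbt, smul_zero]
      have hωt' : ω ↑nm ↑t' = a := by
        rw [ht']
        have : ((((a / ω ↑nm ↑t) • t : ↥L)) : M) = (a / ω ↑nm ↑t) • (t : M) := rfl
        rw [this, map_smul, smul_eq_mul]
        field_simp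
      have hstep : T = ψ a * T := by
        have e0 : ∑ u : ↥L, f (u + t') = ∑ u : ↥L, ψ a * f u := by
          refine Finset.sum_congr rfl fun u _ => ?_
          show f (u + t') = ψ a * f u
          rw [hf, ← AddChar.map_add_eq_mul]
          congr 1
          have e1 : ω ↑u (b t') = 0 := by rw [hbt']; simp
          have e2 : ω ↑t' (b u) = 0 := by rw [← hsym u t', e1]
          have e3 : ω ↑t' (b t') = 0 := by rw [hbt']; simp
          simp only [Submodule.coe_add, map_add, LinearMap.add_apply]
          rw [e1, e2, e3, hωt']
          ring
        calc T = ∑ u : ↥L, f (u + t') :=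
              (Fintype.sum_equiv (Equiv.addRight t') (fun u => f (u + t')) f (fun u => rfl)).symm
          _ = ∑ u : ↥L, ψ a * f u := e0
          _ = ψ a * T := by rw [hT, Finset.mul_sum]
      have : (ψ a - 1) * T = 0 := by rw [sub_mul, ← hstep, one_mul, sub_self]
      rcases mul_eq_zero.1 this with h | h
      · exact absurd (by linear_combination h) hψa
      · exact h
    rw [hLHS, hTzero, hFRL0']
    ring
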